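/- arXiv:2009.13435 — 2 statements merged into one kernel-verified Lean document; each statement's English description precedes it below -/
import Mathlib

section
/- There is an absolute constant C > 0 with the following property. Let f, g, h : Ω → ℝ be C¹ functions such that f, g, ∂₂g, h, ∂₁h are square integrable on Ω and h has zero horizontal average, i.e. ∫_T h(x,y) dx = 0 for every y ∈ ℝ. Then ∫_Ω |f(x,y) g(x,y) h(x,y)| dx dy ≤ C ‖f‖_{L²(Ω)} ‖g‖_{L²(Ω)}^{1/2} ‖∂₂g‖_{L²(Ω)}^{1/2} ‖h‖_{L²(Ω)}^{1/2} ‖∂₁h‖_{L²(Ω)}^{1/2}. -/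
open MeasureTheory Filter

noncomputable section

/-- The spatial domain `Ω = 𝕋 × ℝ` realized as the fundamental domain `(0,1] × ℝ`;
functions on `Ω` are identified with functions on `ℝ × ℝ` that are `1`-periodic
in the first (horizontal) variable. -/
def OmegaStrip : Set (ℝ × ℝ) := Set.Ioc (0:ℝ) 1 ×ˢ (Set.univ : Set ℝ)

/-- `1`-periodicity in the horizontal variable. -/
def PeriodicX (f : ℝ × ℝ → ℝ) : Prop := ∀ x y : ℝ, f (x + 1, y) = f (x, y)

/-- Horizontal partial derivative `∂₁`. -/
def d1 (f : ℝ × ℝ → ℝ) : ℝ × ℝ → ℝ := fun p => deriv (fun x => f (x, p.2)) p.1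

/-- Vertical partial derivative `∂₂`. -/
def d2 (f : ℝ × ℝ → ℝ) : ℝ × ℝ → ℝ := fun p => deriv (fun y => f (p.1, y)) p.2

/-- Squared `L²(Ω)` norm. -/
def sqL2 (f : ℝ × ℝ → ℝ) : ℝ := ∫ p in OmegaStrip, (f p) ^ 2

/-- `L²(Ω)` norm. -/
def l2norm (f : ℝ × ℝ → ℝ) : ℝ := Real.sqrt (sqL2 f)

/-- Square integrability on `Ω`. -/
def SqInt (f : ℝ × ℝ → ℝ) : Prop := IntegrableOn (fun p => (f p) ^ 2) OmegaStrip

/-- Horizontal average `f̄(y) = ∫_𝕋 f(x,y) dx`. -/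
def avgX (f : ℝ × ℝ → ℝ) (y : ℝ) : ℝ := ∫ x in (0:ℝ)..1, f (x, y)

/-- Oscillation part `f̃ = f − f̄`. -/
def oscX (f : ℝ × ℝ → ℝ) : ℝ × ℝ → ℝ := fun p => f p - avgX f p.2

/-- `L²(𝕋)` norm of the horizontal slice at height `y`. -/
def sliceL2x (f : ℝ × ℝ → ℝ) (y : ℝ) : ℝ := Real.sqrt (∫ x in (0:ℝ)..1, (f (x, y)) ^ 2)


open ENNReal intervalIntegral

lemma conj22 : Real.HolderConjugate 2 2 := Real.HolderConjugate.two_two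

lemma lintegral_CS {α : Type*} [MeasurableSpace α] (μ : Measure α) {u v : α → ℝ≥0∞}
    (hu : AEMeasurable u μ) (hv : AEMeasurable v μ) :
    ∫⁻ a, u a * v a ∂μ ≤ (∫⁻ a, u a ^ (2:ℝ) ∂μ) ^ (1/2:ℝ) * (∫⁻ a, v a ^ (2:ℝ) ∂μ) ^ (1/2:ℝ) :=
  ENNReal.lintegral_mul_le_Lp_mul_Lq μ conj22 hu hv

lemma ofReal_abs_rpow_two (r : ℝ) : (ENNReal.ofReal |r|) ^ (2:ℝ) = ENNReal.ofReal (r ^ 2) := by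
  rw [show (2:ℝ) = ((2:ℕ):ℝ) by norm_num, ENNReal.rpow_natCast,
    ← ENNReal.ofReal_pow (abs_nonneg r), sq_abs]

lemma lintegral_sq_abs {α : Type*} [MeasurableSpace α] (μ : Measure α) {u : α → ℝ}
    (hu2 : Integrable (fun a => u a ^ 2) μ) :
    ∫⁻ a, (ENNReal.ofReal |u a|) ^ (2:ℝ) ∂μ = ENNReal.ofReal (∫ a, u a ^ 2 ∂μ) := by
  simp_rw [ofReal_abs_rpow_two]
  rw [MeasureTheory.ofReal_integral_eq_lintegral_ofReal hu2
    (Eventually.of_forall fun a => sq_nonneg _)]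

lemma real_CS {α : Type*} [MeasurableSpace α] (μ : Measure α) {u v : α → ℝ}
    (hu : AEStronglyMeasurable u μ)
    (hv : AEStronglyMeasurable v μ) (hu2 : Integrable (fun a => u a ^ 2) μ)
    (hv2 : Integrable (fun a => v a ^ 2) μ) :
    ∫ a, |u a * v a| ∂μ ≤ Real.sqrt (∫ a, u a ^ 2 ∂μ) * Real.sqrt (∫ a, v a ^ 2 ∂μ) := by
  have h1 : ∫ a, |u a * v a| ∂μ
      = (∫⁻ a, ENNReal.ofReal |u a * v a| ∂μ).toReal := by
    rw [MeasureTheory.integral_eq_lintegral_of_nonneg_ae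
      (Eventually.of_forall fun a => abs_nonneg _)
      (by simpa only [Real.norm_eq_abs, Pi.mul_apply] using (hu.mul hv).norm)]
  have h2 : ∫⁻ a, ENNReal.ofReal |u a * v a| ∂μ
      ≤ ENNReal.ofReal (∫ a, u a ^ 2 ∂μ) ^ (1/2:ℝ) * ENNReal.ofReal (∫ a, v a ^ 2 ∂μ) ^ (1/2:ℝ) := by
    have := lintegral_CS μ (u := fun a => ENNReal.ofReal |u a|)
      (v := fun a => ENNReal.ofReal |v a|)
      (ENNReal.measurable_ofReal.comp_aemeasurable
        ((by simpa only [Real.norm_eq_abs] using hu.norm :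
          AEStronglyMeasurable (fun a => |u a|) μ).aemeasurable))
      (ENNReal.measurable_ofReal.comp_aemeasurable
        ((by simpa only [Real.norm_eq_abs] using hv.norm :
          AEStronglyMeasurable (fun a => |v a|) μ).aemeasurable))
    simp_rw [← ENNReal.ofReal_mul (abs_nonneg _), ← abs_mul] at this
    rwa [lintegral_sq_abs μ hu2, lintegral_sq_abs μ hv2] at this
  rw [h1]
  calc (∫⁻ a, ENNReal.ofReal |u a * v a| ∂μ).toReal
      ≤ (ENNReal.ofReal (∫ a, u a ^ 2 ∂μ) ^ (1/2:ℝ)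
          * ENNReal.ofReal (∫ a, v a ^ 2 ∂μ) ^ (1/2:ℝ)).toReal := by
        refine ENNReal.toReal_mono ?_ h2
        exact ENNReal.mul_ne_top (by simp [ENNReal.rpow_eq_top_iff]) (by simp [ENNReal.rpow_eq_top_iff])
    _ = Real.sqrt (∫ a, u a ^ 2 ∂μ) * Real.sqrt (∫ a, v a ^ 2 ∂μ) := by
        rw [ENNReal.toReal_mul, ← ENNReal.toReal_rpow, ← ENNReal.toReal_rpow,
          ENNReal.toReal_ofReal (by positivity), ENNReal.toReal_ofReal (by positivity),
          Real.sqrt_eq_rpow, Real.sqrt_eq_rpow]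

/-- Zero of a continuous function with zero mean on `[0,1]`. -/
lemma exists_zero_of_avg_zero {φ : ℝ → ℝ} (hc : Continuous φ)
    (havg : ∫ x in (0:ℝ)..1, φ x = 0) : ∃ x₀, φ x₀ = 0 := by
  by_contra hno
  push_neg at hno
  have hii : IntervalIntegrable φ volume 0 1 := hc.intervalIntegrable _ _
  rcases lt_trichotomy (φ 0) 0 with hneg | hzero | hpos
  · -- φ < 0 everywhere on [0,1] (else IVT gives a zero); integral < 0
    have hall : ∀ x, φ x < 0 := by
      intro x
      rcases lt_trichotomy (φ x) 0 with hx | hx | hx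
      · exact hx
      · exact absurd hx (hno x)
      · exfalso
        have : (0:ℝ) ∈ Set.uIcc (φ 0) (φ x) := by
          rw [Set.mem_uIcc]; exact Or.inl ⟨hneg.le, hx.le⟩
        obtain ⟨z, _, hz⟩ := intermediate_value_uIcc hc.continuousOn this
        exact hno z hz
    have : (0:ℝ) < ∫ x in (0:ℝ)..1, -φ x := by
      apply intervalIntegral_pos_of_pos_on (hii.neg)
      · intro x _; simpa using hall x
      · norm_num
    rw [intervalIntegral.integral_neg, havg] at this
    simp at this
  · exact hno 0 hzero
  · have hall : ∀ x, 0 < φ x := by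
      intro x
      rcases lt_trichotomy (φ x) 0 with hx | hx | hx
      · exfalso
        have : (0:ℝ) ∈ Set.uIcc (φ 0) (φ x) := by
          rw [Set.mem_uIcc]; exact Or.inr ⟨hx.le, hpos.le⟩
        obtain ⟨z, _, hz⟩ := intermediate_value_uIcc hc.continuousOn this
        exact hno z hz
      · exact absurd hx (hno x)
      · exact hx
    have : (0:ℝ) < ∫ x in (0:ℝ)..1, φ x :=
      intervalIntegral_pos_of_pos_on hii (fun x _ => hall x) (by norm_num)
    rw [havg] at this; simp at this

/-- Agmon-type inequality on the circle for a zero-mean `C¹` function. -/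
lemma agmon_slice {φ dφ : ℝ → ℝ} (hd : ∀ x, HasDerivAt φ (dφ x) x) (hdc : Continuous dφ)
    (hper : Function.Periodic φ 1) (havg : ∫ x in (0:ℝ)..1, φ x = 0) (x : ℝ) :
    φ x ^ 2 ≤ 2 * Real.sqrt (∫ t in (0:ℝ)..1, φ t ^ 2) * Real.sqrt (∫ t in (0:ℝ)..1, dφ t ^ 2) := by
  have hφc : Continuous φ := by
    rw [continuous_iff_continuousAt]; exact fun t => (hd t).continuousAt
  -- dφ is periodic
  have hdper : Function.Periodic dφ 1 := by
    intro t
    have h1 : HasDerivAt (fun s => φ (s + 1)) (dφ (t + 1)) t := by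
      simpa [Function.comp_def] using (hd (t + 1)).comp t ((hasDerivAt_id t).add_const 1)
    have h2 : (fun s => φ (s + 1)) = φ := funext fun s => hper s
    rw [h2] at h1
    exact h1.unique (hd t)
  -- zero of φ
  obtain ⟨x₀, hx₀⟩ := exists_zero_of_avg_zero hφc havg
  -- reduce x into [x₀, x₀ + 1)
  set k : ℤ := ⌊x - x₀⌋ with hk
  set x' : ℝ := x - k with hx'
  have hφx : φ x = φ x' := by
    rw [hx']
    have := hper.sub_int_mul_eq (x := x) (n := k)
    simpa using this.symm
  have hx'l : x₀ ≤ x' := by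
    have := Int.floor_le (x - x₀); rw [← hk] at this; rw [hx']; linarith
  have hx'r : x' ≤ x₀ + 1 := by
    have := Int.lt_floor_add_one (x - x₀); rw [← hk] at this; rw [hx']; linarith
  -- FTC
  have hsq : ∀ t, HasDerivAt (fun s => φ s ^ 2) (2 * φ t * dφ t) t := by
    intro t
    have := (hd t).fun_pow 2
    simpa [mul_comm, mul_assoc, mul_left_comm] using this
  have hftc : ∫ t in x₀..x', 2 * φ t * dφ t = φ x' ^ 2 - φ x₀ ^ 2 := by
    apply intervalIntegral.integral_eq_sub_of_hasDerivAt (fun t _ => hsq t)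
    exact (Continuous.intervalIntegrable (by continuity) _ _)
  have key : φ x' ^ 2 ≤ ∫ t in x₀..x₀+1, |2 * φ t * dφ t| := by
    rw [hx₀] at hftc
    have h1 : φ x' ^ 2 = ∫ t in x₀..x', 2 * φ t * dφ t := by rw [hftc]; ring
    rw [h1]
    calc ∫ t in x₀..x', 2 * φ t * dφ t ≤ ∫ t in x₀..x', |2 * φ t * dφ t| := by
          apply intervalIntegral.integral_mono_on hx'l
            (Continuous.intervalIntegrable (by continuity) _ _)
            (Continuous.intervalIntegrable (by continuity) _ _)
          intro t _; exact le_abs_self _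
      _ ≤ ∫ t in x₀..x₀+1, |2 * φ t * dφ t| := by
          apply intervalIntegral.integral_mono_interval le_rfl hx'l hx'r
            (Eventually.of_forall fun t => abs_nonneg _)
            (Continuous.intervalIntegrable (by continuity) _ _)
  -- shift the interval by periodicity
  have hshift : ∫ t in x₀..x₀+1, |2 * φ t * dφ t| = ∫ t in (0:ℝ)..1, |2 * φ t * dφ t| := by
    have hp : Function.Periodic (fun t => |2 * φ t * dφ t|) 1 := by
      intro t; simp [hper t, hdper t]
    simpa using hp.intervalIntegral_add_eq x₀ 0
  -- Cauchy–Schwarz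
  have hCS : ∫ t in (0:ℝ)..1, |φ t * dφ t|
      ≤ Real.sqrt (∫ t in (0:ℝ)..1, φ t ^ 2) * Real.sqrt (∫ t in (0:ℝ)..1, dφ t ^ 2) := by
    rw [intervalIntegral.integral_of_le zero_le_one, intervalIntegral.integral_of_le zero_le_one,
      intervalIntegral.integral_of_le zero_le_one]
    exact real_CS (volume.restrict (Set.Ioc (0:ℝ) 1))
      (hφc.aestronglyMeasurable) (hdc.aestronglyMeasurable)
      ((hφc.pow 2).integrableOn_Ioc) ((hdc.pow 2).integrableOn_Ioc)
  have habs : ∫ t in (0:ℝ)..1, |2 * φ t * dφ t| = 2 * ∫ t in (0:ℝ)..1, |φ t * dφ t| := by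
    rw [← intervalIntegral.integral_const_mul]
    congr 1; funext t; rw [abs_mul, abs_mul, abs_two, abs_mul]; ring
  calc φ x ^ 2 = φ x' ^ 2 := by rw [hφx]
    _ ≤ ∫ t in x₀..x₀+1, |2 * φ t * dφ t| := key
    _ = 2 * ∫ t in (0:ℝ)..1, |φ t * dφ t| := by rw [hshift, habs]
    _ ≤ 2 * (Real.sqrt (∫ t in (0:ℝ)..1, φ t ^ 2) * Real.sqrt (∫ t in (0:ℝ)..1, dφ t ^ 2)) := by
        linarith [hCS]
    _ = 2 * Real.sqrt (∫ t in (0:ℝ)..1, φ t ^ 2) * Real.sqrt (∫ t in (0:ℝ)..1, dφ t ^ 2) := by ring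

lemma hasDerivAt_d1 {F : ℝ × ℝ → ℝ} (hF : ContDiff ℝ 1 F) (x y : ℝ) :
    HasDerivAt (fun t => F (t, y)) (d1 F (x, y)) x := by
  have hdiff : DifferentiableAt ℝ (fun t => F (t, y)) x :=
    (hF.differentiable one_ne_zero).comp (differentiable_id.prodMk (differentiable_const y)) x
  exact hdiff.hasDerivAt

lemma hasDerivAt_d2 {F : ℝ × ℝ → ℝ} (hF : ContDiff ℝ 1 F) (x y : ℝ) :
    HasDerivAt (fun t => F (x, t)) (d2 F (x, y)) y := by
  have hdiff : DifferentiableAt ℝ (fun t => F (x, t)) y :=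
    (hF.differentiable one_ne_zero).comp ((differentiable_const x).prodMk differentiable_id) y
  exact hdiff.hasDerivAt

lemma continuous_d1 {F : ℝ × ℝ → ℝ} (hF : ContDiff ℝ 1 F) : Continuous (d1 F) := by
  have key : ∀ p : ℝ × ℝ, d1 F p = (fderiv ℝ F p) (1, 0) := by
    intro p
    have h1 : HasDerivAt (fun t => F (t, p.2)) ((fderiv ℝ F p) (1, 0)) p.1 := by
      have hf : HasFDerivAt F (fderiv ℝ F p) p := (hF.differentiable one_ne_zero p).hasFDerivAt
      have hline : HasDerivAt (fun t : ℝ => (t, p.2)) ((1:ℝ), (0:ℝ)) p.1 :=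
        (hasDerivAt_id p.1).prodMk (hasDerivAt_const p.1 p.2)
      simpa [Function.comp_def] using hf.comp_hasDerivAt p.1 hline
    exact h1.deriv
  rw [show d1 F = fun p => (fderiv ℝ F p) (1, 0) from funext key]
  exact (hF.continuous_fderiv one_ne_zero).clm_apply continuous_const

lemma continuous_d2 {F : ℝ × ℝ → ℝ} (hF : ContDiff ℝ 1 F) : Continuous (d2 F) := by
  have key : ∀ p : ℝ × ℝ, d2 F p = (fderiv ℝ F p) (0, 1) := by
    intro p
    have h1 : HasDerivAt (fun t => F (p.1, t)) ((fderiv ℝ F p) (0, 1)) p.2 := by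
      have hf : HasFDerivAt F (fderiv ℝ F p) p := (hF.differentiable one_ne_zero p).hasFDerivAt
      have hline : HasDerivAt (fun t : ℝ => (p.1, t)) ((0:ℝ), (1:ℝ)) p.2 :=
        (hasDerivAt_const p.2 p.1).prodMk (hasDerivAt_id p.2)
      simpa [Function.comp_def] using hf.comp_hasDerivAt p.2 hline
    exact h1.deriv
  rw [show d2 F = fun p => (fderiv ℝ F p) (0, 1) from funext key]
  exact (hF.continuous_fderiv one_ne_zero).clm_apply continuous_const
lemma omega_meas : (volume : Measure (ℝ×ℝ)).restrict OmegaStrip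
    = (volume.restrict (Set.Ioc (0:ℝ) 1)).prod volume := by
  rw [show (volume : Measure ℝ) = volume.restrict Set.univ by rw [Measure.restrict_univ]]
  rw [Measure.restrict_restrict_of_subset (Set.subset_univ _), Measure.prod_restrict,
    ← Measure.volume_eq_prod, OmegaStrip]

lemma slice_sq_bound {g : ℝ × ℝ → ℝ} (hg : ContDiff ℝ 1 g) (hg2 : SqInt g)
    (hgd2 : SqInt (d2 g)) (y : ℝ) :
    (∫ x in Set.Ioc (0:ℝ) 1, g (x, y) ^ 2) ≤ 2 * l2norm g * l2norm (d2 g) := by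
  have hgc : Continuous g := hg.continuous
  have hd2c : Continuous (d2 g) := continuous_d2 hg
  set ψ : ℝ × ℝ → ℝ := fun p => |2 * g p * d2 g p| with hψ
  have hψc : Continuous ψ := by continuity
  have hψnn : ∀ p, 0 ≤ ψ p := fun p => abs_nonneg _
  -- ψ integrable on Ω
  have hψint : IntegrableOn ψ OmegaStrip := by
    have hq : IntegrableOn (fun p => g p ^ 2 + d2 g p ^ 2) OmegaStrip := hg2.add hgd2
    refine Integrable.mono' hq (hψc.aestronglyMeasurable.restrict) ?_
    refine Eventually.of_forall fun p => ?_
    rw [Real.norm_eq_abs, abs_abs, abs_mul, abs_mul, abs_two]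
    nlinarith [sq_nonneg (|g p| - |d2 g p|), abs_nonneg (g p), abs_nonneg (d2 g p),
      sq_abs (g p), sq_abs (d2 g p)]
  -- CS bound for the Ω-integral of ψ
  have hψbound : ∫ p in OmegaStrip, ψ p ≤ 2 * (l2norm g * l2norm (d2 g)) := by
    have h2 : ∫ p in OmegaStrip, ψ p = 2 * ∫ p in OmegaStrip, |g p * d2 g p| := by
      rw [← MeasureTheory.integral_const_mul]
      congr 1; funext p; simp only [hψ, abs_mul, abs_two, mul_assoc]
    rw [h2]
    have := real_CS ((volume : Measure (ℝ×ℝ)).restrict OmegaStrip)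
      (hgc.aestronglyMeasurable.restrict) (hd2c.aestronglyMeasurable.restrict) hg2 hgd2
    have h3 : (2:ℝ) > 0 := by norm_num
    unfold l2norm sqL2
    nlinarith [this]
  -- slice integrability
  have hslice : ∀ t : ℝ, IntegrableOn (fun x => g (x, t) ^ 2) (Set.Ioc (0:ℝ) 1) :=
    fun t => (((hgc.comp (continuous_id.prodMk continuous_const)).pow 2)).integrableOn_Ioc
  set Gr : ℝ → ℝ := fun t => ∫ x in Set.Ioc (0:ℝ) 1, g (x, t) ^ 2 with hGr
  have hGr_nonneg : ∀ t, 0 ≤ Gr t := fun t =>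
    setIntegral_nonneg measurableSet_Ioc fun x _ => sq_nonneg _
  -- key FTC bound
  have hkey : ∀ y' : ℝ, Gr y ≤ Gr y' + ∫ p in OmegaStrip, ψ p := by
    intro y'
    set m := min y y' with hm
    set M := max y y' with hM
    set w : ℝ → ℝ → ℝ := fun x t => 2 * g (x, t) * d2 g (x, t) with hw
    have hwc : Continuous (fun p : ℝ × ℝ => w p.1 p.2) := by
      rw [hw]; continuity
    have hftc : ∀ x : ℝ, g (x, y) ^ 2 - g (x, y') ^ 2 = ∫ t in y'..y, w x t := by
      intro x
      rw [intervalIntegral.integral_eq_sub_of_hasDerivAt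
        (f := fun t => g (x, t) ^ 2) (fun t _ => by
          have h := (hasDerivAt_d2 hg x t).fun_pow 2
          convert h using 1
          · rfl
          simp only [hw]; ring)
        ((Continuous.intervalIntegrable (by fun_prop) _ _))]
    -- pointwise bound on the inner integral
    set K : ℝ → ℝ := fun x => ∫ t in Set.Ioc m M, ψ (x, t) with hK
    have hDle : ∀ x : ℝ, g (x, y) ^ 2 - g (x, y') ^ 2 ≤ K x := by
      intro x
      rw [hftc x]
      have habs : |∫ t in y'..y, w x t| ≤ K x := by
        rcases le_total y' y with hle | hle
        · rw [intervalIntegral.integral_of_le hle]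
          calc |∫ t in Set.Ioc y' y, w x t| ≤ ∫ t in Set.Ioc y' y, |w x t| := by
                simpa [Real.norm_eq_abs] using
                  norm_integral_le_integral_norm (μ := volume.restrict (Set.Ioc y' y))
                    (fun t => w x t)
            _ = K x := by rw [hK]; congr 1 <;> simp [hm, hM, hle, min_eq_left, max_eq_right]
        · rw [intervalIntegral.integral_symm, intervalIntegral.integral_of_le hle, abs_neg]
          calc |∫ t in Set.Ioc y y', w x t| ≤ ∫ t in Set.Ioc y y', |w x t| := by
                simpa [Real.norm_eq_abs] using
                  norm_integral_le_integral_norm (μ := volume.restrict (Set.Ioc y y'))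
                    (fun t => w x t)
            _ = K x := by rw [hK]; congr 1 <;> simp [hm, hM, hle, min_eq_right, max_eq_left]
      exact le_trans (le_abs_self _) habs
    -- integrability of ψ on the rectangle, and the value of ∫ K
    have hrect : IntegrableOn ψ (Set.Ioc (0:ℝ) 1 ×ˢ Set.Ioc m M) := by
      refine IntegrableOn.mono_set
        (t := Set.Icc (0:ℝ) 1 ×ˢ Set.Icc m M)
        (hψc.continuousOn.integrableOn_compact (isCompact_Icc.prod isCompact_Icc))
        (Set.prod_mono Set.Ioc_subset_Icc_self Set.Ioc_subset_Icc_self)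
    have hrect' : Integrable ψ ((volume.restrict (Set.Ioc (0:ℝ) 1)).prod
        (volume.restrict (Set.Ioc m M))) := by
      rwa [Measure.prod_restrict, ← IntegrableOn]
    have hKint : Integrable K (volume.restrict (Set.Ioc (0:ℝ) 1)) := by
      have := hrect'.integral_prod_left
      simpa [hK] using this
    have hKval : ∫ x in Set.Ioc (0:ℝ) 1, K x ≤ ∫ p in OmegaStrip, ψ p := by
      have h1 : ∫ x in Set.Ioc (0:ℝ) 1, K x
          = ∫ p, ψ p ∂((volume.restrict (Set.Ioc (0:ℝ) 1)).prod
            (volume.restrict (Set.Ioc m M))) := by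
        rw [hK]
        exact (integral_integral (f := fun x t => ψ (x, t)) (by rwa [Function.uncurry_def]))
      rw [h1, Measure.prod_restrict]
      refine setIntegral_mono_set (by rwa [IntegrableOn] at hψint ⊢) ?_ ?_
      · exact Eventually.of_forall fun p => hψnn p
      · refine HasSubset.Subset.eventuallyLE ?_
        exact Set.prod_mono le_rfl (Set.subset_univ _)
    -- put it together
    have hsub : Gr y - Gr y' ≤ ∫ x in Set.Ioc (0:ℝ) 1, K x := by
      rw [hGr, ← integral_sub (hslice y) (hslice y')]
      exact integral_mono ((hslice y).sub (hslice y')) hKint hDle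
    linarith [hsub, hKval]
  -- Gr is integrable with total integral sqL2 g
  have hg2' : Integrable (fun p : ℝ × ℝ => g p ^ 2)
      ((volume.restrict (Set.Ioc (0:ℝ) 1)).prod volume) := by
    rw [← omega_meas]; exact hg2
  have hGrInt : Integrable Gr volume := by
    have := hg2'.integral_prod_right
    simpa [hGr] using this
  have hGrTot : ∫ t, Gr t = sqL2 g := by
    rw [hGr, sqL2, ← integral_prod_symm _ hg2']
    rw [omega_meas]
  have hTnn : 0 ≤ ∫ t, Gr t := integral_nonneg hGr_nonneg
  -- conclude
  have main : ∀ ε : ℝ, 0 < ε → Gr y ≤ 2 * (l2norm g * l2norm (d2 g)) + ε := by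
    intro ε hε
    have hex : ∃ y' : ℝ, Gr y' ≤ ε := by
      by_contra hno
      push_neg at hno
      set T : ℝ := ∫ t, Gr t with hT
      set N : ℝ := T / ε + 1 with hN
      have hNpos : 0 < N := by
        have : 0 ≤ T / ε := div_nonneg hTnn hε.le
        rw [hN]; linarith
      have h1 : ∫ t in Set.Icc (0:ℝ) N, (ε : ℝ) ≤ ∫ t in Set.Icc (0:ℝ) N, Gr t := by
        refine setIntegral_mono_on (integrableOn_const ?_) hGrInt.integrableOn
          measurableSet_Icc (fun t _ => (hno t).le)
        rw [Real.volume_Icc]; exact ENNReal.ofReal_ne_top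
      have h2 : ∫ t in Set.Icc (0:ℝ) N, (ε : ℝ) = N * ε := by
        rw [setIntegral_const, measureReal_def, Real.volume_Icc, smul_eq_mul]
        rw [ENNReal.toReal_ofReal (by linarith)]
        ring_nf
      have h3 : ∫ t in Set.Icc (0:ℝ) N, Gr t ≤ T := by
        rw [hT]
        exact setIntegral_le_integral hGrInt (Eventually.of_forall hGr_nonneg)
      have h4 : N * ε = T + ε := by rw [hN]; field_simp
      linarith
    obtain ⟨y', hy'⟩ := hex
    have := hkey y'
    linarith [hψbound]
  have := le_of_forall_pos_le_add main
  linarith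

lemma rpow_half_sq (x : ℝ≥0∞) : (x ^ (1/2:ℝ)) ^ (2:ℝ) = x := by
  rw [← ENNReal.rpow_mul]; norm_num

lemma sqL2_nonneg (f : ℝ × ℝ → ℝ) : 0 ≤ sqL2 f :=
  setIntegral_nonneg (measurableSet_Ioc.prod MeasurableSet.univ) fun p _ => sq_nonneg _

/-- Tonelli for squares. -/
lemma tonelli_sq {F : ℝ × ℝ → ℝ} (hFc : Continuous F) (hFi : SqInt F) :
    ∫⁻ y, ∫⁻ x, ENNReal.ofReal (F (x, y) ^ 2) ∂(volume.restrict (Set.Ioc (0:ℝ) 1)) ∂volume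
      = ENNReal.ofReal (sqL2 F) := by
  rw [← MeasureTheory.lintegral_prod_symm' (μ := volume.restrict (Set.Ioc (0:ℝ) 1))
      (ν := (volume : Measure ℝ)) (fun p => ENNReal.ofReal (F p ^ 2))
      (ENNReal.measurable_ofReal.comp ((hFc.pow 2).measurable))]
  rw [← omega_meas, sqL2,
    MeasureTheory.ofReal_integral_eq_lintegral_ofReal hFi
      (Eventually.of_forall fun p => sq_nonneg _)]

/-- slice lintegral equals ofReal of slice integral, for continuous F. -/
lemma slice_lintegral {F : ℝ × ℝ → ℝ} (hFc : Continuous F) (y : ℝ) :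
    ∫⁻ x, ENNReal.ofReal (F (x, y) ^ 2) ∂(volume.restrict (Set.Ioc (0:ℝ) 1))
      = ENNReal.ofReal (∫ x in Set.Ioc (0:ℝ) 1, F (x, y) ^ 2) := by
  have hint : IntegrableOn (fun x => F (x, y) ^ 2) (Set.Ioc (0:ℝ) 1) :=
    ((hFc.comp (continuous_id.prodMk continuous_const)).pow 2).integrableOn_Ioc
  rw [MeasureTheory.ofReal_integral_eq_lintegral_ofReal hint
    (Eventually.of_forall fun x => sq_nonneg _)]

lemma rpow_two_half (x : ℝ≥0∞) : (x ^ (2:ℝ)) ^ (1/2:ℝ) = x := by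
  rw [← ENNReal.rpow_mul]; norm_num

lemma ofReal_sqrt_rpow {a : ℝ} (ha : 0 ≤ a) :
    ENNReal.ofReal (Real.sqrt a) = (ENNReal.ofReal a) ^ (1/2:ℝ) := by
  rw [Real.sqrt_eq_rpow, ← ENNReal.ofReal_rpow_of_nonneg ha (by norm_num)]


/-- Anisotropic trilinear estimate: there is an absolute constant
`C > 0` such that for all `C¹` functions `f, g, h` on `Ω = 𝕋 × ℝ` with
`f, g, ∂₂g, h, ∂₁h ∈ L²(Ω)` and `h` of zero horizontal average,
`∫_Ω |fgh| ≤ C ‖f‖_{L²} ‖g‖_{L²}^{1/2} ‖∂₂g‖_{L²}^{1/2} ‖h‖_{L²}^{1/2} ‖∂₁h‖_{L²}^{1/2}`. -/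
theorem statement5 :
    ∃ C : ℝ, 0 < C ∧ ∀ f g h : ℝ × ℝ → ℝ,
      ContDiff ℝ 1 f → ContDiff ℝ 1 g → ContDiff ℝ 1 h →
      PeriodicX f → PeriodicX g → PeriodicX h →
      SqInt f → SqInt g → SqInt (d2 g) → SqInt h → SqInt (d1 h) →
      (∀ y : ℝ, avgX h y = 0) →
      (∫ p in OmegaStrip, |f p * g p * h p|) ≤
        C * l2norm f * Real.sqrt (l2norm g) * Real.sqrt (l2norm (d2 g)) *
          Real.sqrt (l2norm h) * Real.sqrt (l2norm (d1 h)) := by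
  refine ⟨2, by norm_num, ?_⟩
  intro f g h hf hg hh hpf hpg hph hf2 hg2 hgd2 hh2 hhd1 havg
  have hfc : Continuous f := hf.continuous
  have hgc : Continuous g := hg.continuous
  have hhc : Continuous h := hh.continuous
  have hd1hc : Continuous (d1 h) := continuous_d1 hh
  set eF : ℝ → ℝ≥0∞ := fun y => ∫⁻ x, ENNReal.ofReal (f (x, y) ^ 2) ∂(volume.restrict (Set.Ioc (0:ℝ) 1)) with heF
  set eG : ℝ → ℝ≥0∞ := fun y => ∫⁻ x, ENNReal.ofReal (g (x, y) ^ 2) ∂(volume.restrict (Set.Ioc (0:ℝ) 1)) with heG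
  set eH : ℝ → ℝ≥0∞ := fun y => ∫⁻ x, ENNReal.ofReal (h (x, y) ^ 2) ∂(volume.restrict (Set.Ioc (0:ℝ) 1)) with heH
  set eHd : ℝ → ℝ≥0∞ := fun y => ∫⁻ x, ENNReal.ofReal (d1 h (x, y) ^ 2) ∂(volume.restrict (Set.Ioc (0:ℝ) 1)) with heHd
  set W : ℝ → ℝ≥0∞ := fun y => (2 * (eH y) ^ (1/2:ℝ) * (eHd y) ^ (1/2:ℝ)) ^ (1/2:ℝ) with hW
  -- measurability in y
  have meF : Measurable eF := Measurable.lintegral_prod_left'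
    (ENNReal.measurable_ofReal.comp ((hfc.pow 2).measurable))
  have meH : Measurable eH := Measurable.lintegral_prod_left'
    (ENNReal.measurable_ofReal.comp ((hhc.pow 2).measurable))
  have meHd : Measurable eHd := Measurable.lintegral_prod_left'
    (ENNReal.measurable_ofReal.comp ((hd1hc.pow 2).measurable))
  have mW : Measurable W := by
    apply ENNReal.continuous_rpow_const.measurable.comp
    exact ((measurable_const.mul
      (ENNReal.continuous_rpow_const.measurable.comp meH)).mul
      (ENNReal.continuous_rpow_const.measurable.comp meHd))
  -- finiteness of W
  have hWne : ∀ y, W y ≠ ⊤ := by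
    intro y
    rw [hW]
    apply ENNReal.rpow_ne_top_of_nonneg (by norm_num)
    have h1 : eH y ≠ ⊤ := by
      simp only [heH]; rw [slice_lintegral hhc y]; exact ENNReal.ofReal_ne_top
    have h2 : eHd y ≠ ⊤ := by
      simp only [heHd]; rw [slice_lintegral hd1hc y]; exact ENNReal.ofReal_ne_top
    exact ENNReal.mul_ne_top (ENNReal.mul_ne_top (by norm_num)
      (ENNReal.rpow_ne_top_of_nonneg (by norm_num) h1))
      (ENNReal.rpow_ne_top_of_nonneg (by norm_num) h2)
  -- Agmon bound
  have hWb : ∀ x y : ℝ, ENNReal.ofReal |h (x, y)| ≤ W y := by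
    intro x y
    set a : ℝ := ∫ t in (0:ℝ)..1, h (t, y) ^ 2 with ha
    set b : ℝ := ∫ t in (0:ℝ)..1, d1 h (t, y) ^ 2 with hb
    have han : 0 ≤ a := intervalIntegral.integral_nonneg zero_le_one fun t _ => sq_nonneg _
    have hbn : 0 ≤ b := intervalIntegral.integral_nonneg zero_le_one fun t _ => sq_nonneg _
    have hagmon : h (x, y) ^ 2 ≤ 2 * Real.sqrt a * Real.sqrt b := by
      refine agmon_slice (φ := fun t => h (t, y)) (dφ := fun t => d1 h (t, y))
        (fun t => hasDerivAt_d1 hh t y)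
        (hd1hc.comp (continuous_id.prodMk continuous_const))
        (fun t => hph t y) (havg y) x
    have heHa : eH y = ENNReal.ofReal a := by
      simp only [heH]
      rw [slice_lintegral hhc y, ha, intervalIntegral.integral_of_le zero_le_one]
    have heHb : eHd y = ENNReal.ofReal b := by
      simp only [heHd]
      rw [slice_lintegral hd1hc y, hb, intervalIntegral.integral_of_le zero_le_one]
    calc ENNReal.ofReal |h (x, y)|
        = (ENNReal.ofReal (h (x, y) ^ 2)) ^ (1/2:ℝ) := by
          rw [← ofReal_abs_rpow_two, rpow_two_half]
      _ ≤ (ENNReal.ofReal (2 * Real.sqrt a * Real.sqrt b)) ^ (1/2:ℝ) :=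
          ENNReal.rpow_le_rpow (ENNReal.ofReal_le_ofReal hagmon) (by norm_num)
      _ = W y := by
          simp only [hW]
          rw [heHa, heHb]
          congr 1
          rw [ENNReal.ofReal_mul (by positivity), ENNReal.ofReal_mul (by norm_num),
            ofReal_sqrt_rpow han, ofReal_sqrt_rpow hbn]
          norm_num
  -- abbreviations
  set Nf : ℝ := l2norm f with hNf
  set Ng : ℝ := l2norm g with hNg
  set Ngd : ℝ := l2norm (d2 g) with hNgd
  set Nh : ℝ := l2norm h with hNh
  set Nhd : ℝ := l2norm (d1 h) with hNhd
  have hNf0 : 0 ≤ Nf := Real.sqrt_nonneg _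
  have hNg0 : 0 ≤ Ng := Real.sqrt_nonneg _
  have hNgd0 : 0 ≤ Ngd := Real.sqrt_nonneg _
  have hNh0 : 0 ≤ Nh := Real.sqrt_nonneg _
  have hNhd0 : 0 ≤ Nhd := Real.sqrt_nonneg _
  -- step C+D : the inner x-integral bound, for every y
  have stepC : ∀ y : ℝ,
      (∫⁻ x, ENNReal.ofReal |f (x, y) * g (x, y) * h (x, y)| ∂(volume.restrict (Set.Ioc (0:ℝ) 1)))
        ≤ ENNReal.ofReal (2 * (Ng * Ngd)) ^ (1/2:ℝ) * ((eF y) ^ (1/2:ℝ) * W y) := by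
    intro y
    have step1 : (∫⁻ x, ENNReal.ofReal |f (x, y) * g (x, y) * h (x, y)| ∂(volume.restrict (Set.Ioc (0:ℝ) 1)))
        ≤ ∫⁻ x, (ENNReal.ofReal |f (x, y)| * ENNReal.ofReal |g (x, y)|) * W y ∂(volume.restrict (Set.Ioc (0:ℝ) 1)) := by
      refine lintegral_mono fun x => ?_
      rw [abs_mul, abs_mul, ENNReal.ofReal_mul (by positivity),
        ENNReal.ofReal_mul (abs_nonneg _)]
      exact mul_le_mul' le_rfl (hWb x y)
    have step2 : (∫⁻ x, (ENNReal.ofReal |f (x, y)| * ENNReal.ofReal |g (x, y)|) * W y ∂(volume.restrict (Set.Ioc (0:ℝ) 1)))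
        = (∫⁻ x, ENNReal.ofReal |f (x, y)| * ENNReal.ofReal |g (x, y)| ∂(volume.restrict (Set.Ioc (0:ℝ) 1))) * W y :=
      lintegral_mul_const' (W y) _ (hWne y)
    have step3 : (∫⁻ x, ENNReal.ofReal |f (x, y)| * ENNReal.ofReal |g (x, y)| ∂(volume.restrict (Set.Ioc (0:ℝ) 1)))
        ≤ (eF y) ^ (1/2:ℝ) * (eG y) ^ (1/2:ℝ) := by
      have := lintegral_CS (volume.restrict (Set.Ioc (0:ℝ) 1))
        (u := fun x => ENNReal.ofReal |f (x, y)|) (v := fun x => ENNReal.ofReal |g (x, y)|)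
        (ENNReal.measurable_ofReal.comp
          ((hfc.comp (continuous_id.prodMk continuous_const)).abs.measurable) |>.aemeasurable)
        (ENNReal.measurable_ofReal.comp
          ((hgc.comp (continuous_id.prodMk continuous_const)).abs.measurable) |>.aemeasurable)
      simp_rw [ofReal_abs_rpow_two] at this
      exact this
    have step4 : (eG y) ^ (1/2:ℝ) ≤ ENNReal.ofReal (2 * (Ng * Ngd)) ^ (1/2:ℝ) := by
      refine ENNReal.rpow_le_rpow ?_ (by norm_num)
      simp only [heG]
      rw [slice_lintegral hgc y]
      refine ENNReal.ofReal_le_ofReal ?_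
      have := slice_sq_bound hg hg2 hgd2 y
      rw [← hNg, ← hNgd] at this
      linarith
    calc (∫⁻ x, ENNReal.ofReal |f (x, y) * g (x, y) * h (x, y)| ∂(volume.restrict (Set.Ioc (0:ℝ) 1)))
        ≤ (∫⁻ x, ENNReal.ofReal |f (x, y)| * ENNReal.ofReal |g (x, y)| ∂(volume.restrict (Set.Ioc (0:ℝ) 1))) * W y := by
          rw [← step2]; exact step1
      _ ≤ ((eF y) ^ (1/2:ℝ) * (eG y) ^ (1/2:ℝ)) * W y := mul_le_mul_left step3 _
      _ ≤ ((eF y) ^ (1/2:ℝ) * ENNReal.ofReal (2 * (Ng * Ngd)) ^ (1/2:ℝ)) * W y :=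
          mul_le_mul_left (mul_le_mul_right step4 _) _
      _ = ENNReal.ofReal (2 * (Ng * Ngd)) ^ (1/2:ℝ) * ((eF y) ^ (1/2:ℝ) * W y) := by ring
  -- integral of W^2
  have intWsq : ∫⁻ y, (W y) ^ (2:ℝ) ≤ ENNReal.ofReal (2 * (Nh * Nhd)) := by
    have hWsq : ∀ y, (W y) ^ (2:ℝ) = 2 * ((eH y) ^ (1/2:ℝ) * (eHd y) ^ (1/2:ℝ)) := by
      intro y; simp only [hW]; rw [rpow_half_sq]; ring
    calc ∫⁻ y, (W y) ^ (2:ℝ)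
        = ∫⁻ y, 2 * ((eH y) ^ (1/2:ℝ) * (eHd y) ^ (1/2:ℝ)) := lintegral_congr hWsq
      _ = 2 * ∫⁻ y, (eH y) ^ (1/2:ℝ) * (eHd y) ^ (1/2:ℝ) :=
          lintegral_const_mul' 2 _ (by norm_num)
      _ ≤ 2 * ((∫⁻ y, ((eH y) ^ (1/2:ℝ)) ^ (2:ℝ)) ^ (1/2:ℝ)
            * (∫⁻ y, ((eHd y) ^ (1/2:ℝ)) ^ (2:ℝ)) ^ (1/2:ℝ)) := by
          refine mul_le_mul_right ?_ 2
          exact lintegral_CS volume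
            ((ENNReal.continuous_rpow_const.measurable.comp meH).aemeasurable)
            ((ENNReal.continuous_rpow_const.measurable.comp meHd).aemeasurable)
      _ = 2 * ((∫⁻ y, eH y) ^ (1/2:ℝ) * (∫⁻ y, eHd y) ^ (1/2:ℝ)) := by
          simp_rw [rpow_half_sq]
      _ = ENNReal.ofReal (2 * (Nh * Nhd)) := by
          simp only [heH, heHd]
          rw [tonelli_sq hhc hh2, tonelli_sq hd1hc hhd1,
            ← ofReal_sqrt_rpow (sqL2_nonneg h), ← ofReal_sqrt_rpow (sqL2_nonneg (d1 h)),
            ← ENNReal.ofReal_mul (Real.sqrt_nonneg _), ← ENNReal.ofReal_ofNat 2,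
            ← ENNReal.ofReal_mul (by norm_num)]
          congr 1
  -- the full lintegral chain
  have hmeas : Measurable fun p : ℝ × ℝ => ENNReal.ofReal |f p * g p * h p| :=
    ENNReal.measurable_ofReal.comp (((hfc.mul hgc).mul hhc).abs.measurable)
  have hcne : (ENNReal.ofReal (2 * (Ng * Ngd))) ^ (1/2:ℝ) ≠ ⊤ :=
    ENNReal.rpow_ne_top_of_nonneg (by norm_num) ENNReal.ofReal_ne_top
  have chain : (∫⁻ p, ENNReal.ofReal |f p * g p * h p| ∂(volume.restrict OmegaStrip))
      ≤ ENNReal.ofReal (2 * Nf * Real.sqrt Ng * Real.sqrt Ngd * Real.sqrt Nh * Real.sqrt Nhd) := by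
    rw [omega_meas, MeasureTheory.lintegral_prod_symm' _ hmeas]
    calc ∫⁻ y, ∫⁻ x, ENNReal.ofReal |f (x, y) * g (x, y) * h (x, y)|
          ∂(volume.restrict (Set.Ioc (0:ℝ) 1)) ∂volume
        ≤ ∫⁻ y, ENNReal.ofReal (2 * (Ng * Ngd)) ^ (1/2:ℝ) * ((eF y) ^ (1/2:ℝ) * W y) ∂volume :=
          lintegral_mono stepC
      _ = ENNReal.ofReal (2 * (Ng * Ngd)) ^ (1/2:ℝ) * ∫⁻ y, (eF y) ^ (1/2:ℝ) * W y ∂volume :=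
          lintegral_const_mul' _ _ hcne
      _ ≤ ENNReal.ofReal (2 * (Ng * Ngd)) ^ (1/2:ℝ)
            * ((∫⁻ y, ((eF y) ^ (1/2:ℝ)) ^ (2:ℝ)) ^ (1/2:ℝ) * (∫⁻ y, (W y) ^ (2:ℝ)) ^ (1/2:ℝ)) := by
          refine mul_le_mul_right ?_ _
          exact lintegral_CS volume
            ((ENNReal.continuous_rpow_const.measurable.comp meF).aemeasurable) mW.aemeasurable
      _ = ENNReal.ofReal (2 * (Ng * Ngd)) ^ (1/2:ℝ)
            * ((ENNReal.ofReal (sqL2 f)) ^ (1/2:ℝ) * (∫⁻ y, (W y) ^ (2:ℝ)) ^ (1/2:ℝ)) := by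
          simp_rw [rpow_half_sq]
          simp only [heF]
          rw [tonelli_sq hfc hf2]
      _ ≤ ENNReal.ofReal (2 * (Ng * Ngd)) ^ (1/2:ℝ)
            * ((ENNReal.ofReal (sqL2 f)) ^ (1/2:ℝ)
              * (ENNReal.ofReal (2 * (Nh * Nhd))) ^ (1/2:ℝ)) := by
          exact mul_le_mul_right (mul_le_mul_right
            (ENNReal.rpow_le_rpow intWsq (by norm_num)) _) _
      _ = ENNReal.ofReal (2 * Nf * Real.sqrt Ng * Real.sqrt Ngd * Real.sqrt Nh * Real.sqrt Nhd) := by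
          rw [← ofReal_sqrt_rpow (by positivity : (0:ℝ) ≤ 2 * (Ng * Ngd)),
            ← ofReal_sqrt_rpow (sqL2_nonneg f),
            ← ofReal_sqrt_rpow (by positivity : (0:ℝ) ≤ 2 * (Nh * Nhd)),
            ← ENNReal.ofReal_mul (Real.sqrt_nonneg _), ← ENNReal.ofReal_mul (Real.sqrt_nonneg _)]
          congr 1
          have hNfdef : Real.sqrt (sqL2 f) = Nf := rfl
          have h22 : Real.sqrt 2 * Real.sqrt 2 = 2 := Real.mul_self_sqrt (by norm_num)
          rw [Real.sqrt_mul (by norm_num : (0:ℝ) ≤ 2) (Ng * Ngd), Real.sqrt_mul hNg0,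
            Real.sqrt_mul (by norm_num : (0:ℝ) ≤ 2) (Nh * Nhd), Real.sqrt_mul hNh0, hNfdef]
          linear_combination (Nf * Real.sqrt Ng * Real.sqrt Ngd * Real.sqrt Nh * Real.sqrt Nhd) * h22
  -- wrap up
  have habs_meas : AEStronglyMeasurable (fun p => |f p * g p * h p|)
      (volume.restrict OmegaStrip) :=
    (((hfc.mul hgc).mul hhc).abs).aestronglyMeasurable.restrict
  rw [MeasureTheory.integral_eq_lintegral_of_nonneg_ae
    (Eventually.of_forall fun p => abs_nonneg _) habs_meas]
  calc (∫⁻ p, ENNReal.ofReal |f p * g p * h p| ∂(volume.restrict OmegaStrip)).toReal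
      ≤ (ENNReal.ofReal
          (2 * Nf * Real.sqrt Ng * Real.sqrt Ngd * Real.sqrt Nh * Real.sqrt Nhd)).toReal :=
        ENNReal.toReal_mono ENNReal.ofReal_ne_top chain
    _ = 2 * Nf * Real.sqrt Ng * Real.sqrt Ngd * Real.sqrt Nh * Real.sqrt Nhd :=
        ENNReal.toReal_ofReal (by positivity)


end
end

section
/- There is an absolute constant C > 0 with the following property. Let f, g, h : Ω → ℝ be C¹ functions such that f, ∂₂f, g, ∂₂g, h, ∂₁h are square integrable on Ω and h has zero horizontal average, i.e. ∫_T h(x,y) dx = 0 for every y ∈ ℝ. Then ∫_Ω |f(x,y) g(x,y) h(x,y)| dx dy ≤ C ‖f‖_{L²(Ω)}^{1/2} ‖∂₂f‖_{L²(Ω)}^{1/2} ‖g‖_{L²(Ω)} ( ‖h‖_{L²(Ω)}^{1/2} ‖∂₁h‖_{L²(Ω)}^{1/2} ), obtained by combining the anisotropic Hölder inequality ∫_Ω |fgh| ≤ ‖f‖_{L∞_y L²_x} ‖g‖_{L²(Ω)} ‖h‖_{L∞_x L²_y} with the one-dimensional interpolation inequalities in each variable. -/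
open MeasureTheory Filter

noncomputable section

lemma cs_int {α : Type*} [MeasurableSpace α] (μ : Measure α) (f g : α → ℝ)
    (hm : AEStronglyMeasurable (fun a => f a * g a) μ)
    (hf : Integrable (fun a => f a ^ 2) μ) (hg : Integrable (fun a => g a ^ 2) μ) :
    ∫ a, |f a * g a| ∂μ ≤ Real.sqrt (∫ a, f a ^ 2 ∂μ) * Real.sqrt (∫ a, g a ^ 2 ∂μ) := by
  set A := ∫ a, f a ^ 2 ∂μ with hA
  set B := ∫ a, g a ^ 2 ∂μ with hB
  have hA0 : 0 ≤ A := integral_nonneg fun a => sq_nonneg _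
  have hB0 : 0 ≤ B := integral_nonneg fun a => sq_nonneg _
  have key : ∀ ε : ℝ, 0 < ε → (∫ a, |f a * g a| ∂μ) ≤ (ε * A + B / ε) / 2 := by
    intro ε hε
    have hint : Integrable (fun a => (ε * f a ^ 2 + g a ^ 2 / ε) / 2) μ :=
      ((hf.const_mul ε).add (hg.div_const ε)).div_const 2
    have hle : ∀ a, |f a * g a| ≤ (ε * f a ^ 2 + g a ^ 2 / ε) / 2 := by
      intro a
      have h1 : |f a * g a| * (2 * ε) ≤ ε * f a ^ 2 * ε + g a ^ 2 := by
        rw [abs_mul, ← sq_abs (f a), ← sq_abs (g a)]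
        nlinarith [sq_nonneg (ε * |f a| - |g a|), abs_nonneg (f a), abs_nonneg (g a), hε]
      rw [le_div_iff₀ (by norm_num : (0:ℝ) < 2), ← mul_le_mul_iff_of_pos_right hε, add_mul,
        div_mul_cancel₀ _ hε.ne']
      ring_nf at h1 ⊢
      linarith
    calc ∫ a, |f a * g a| ∂μ ≤ ∫ a, (ε * f a ^ 2 + g a ^ 2 / ε) / 2 ∂μ := by
          refine integral_mono_of_nonneg (Eventually.of_forall fun a => abs_nonneg _) hint
            (Eventually.of_forall hle)
      _ = (ε * A + B / ε) / 2 := by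
          rw [integral_div, integral_add (hf.const_mul ε) (hg.div_const ε),
            integral_const_mul, integral_div]
  rcases eq_or_lt_of_le hA0 with hA0' | hApos
  · have : ∀ δ : ℝ, 0 < δ → (∫ a, |f a * g a| ∂μ) ≤ δ := by
      intro δ hδ
      have hεpos : 0 < (B + 1) / (2 * δ) := by positivity
      have := key _ hεpos
      calc (∫ a, |f a * g a| ∂μ) ≤ ((B + 1) / (2 * δ) * A + B / ((B + 1) / (2 * δ))) / 2 := this
        _ = B * δ / (B + 1) := by rw [← hA0']; field_simp; ring
        _ ≤ δ := by
            rw [div_le_iff₀ (by linarith)]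
            nlinarith
    have h0 : (∫ a, |f a * g a| ∂μ) ≤ 0 := by
      by_contra hc
      push_neg at hc
      have := this _ (half_pos hc)
      linarith
    calc (∫ a, |f a * g a| ∂μ) ≤ 0 := h0
      _ ≤ _ := by positivity
  rcases eq_or_lt_of_le hB0 with hB0' | hBpos
  · have : ∀ δ : ℝ, 0 < δ → (∫ a, |f a * g a| ∂μ) ≤ δ := by
      intro δ hδ
      have hεpos : 0 < (2 * δ) / (A + 1) := by positivity
      have := key _ hεpos
      calc (∫ a, |f a * g a| ∂μ) ≤ ((2 * δ) / (A + 1) * A + B / ((2 * δ) / (A + 1))) / 2 := this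
        _ = A * δ / (A + 1) := by rw [← hB0']; field_simp; ring
        _ ≤ δ := by
            rw [div_le_iff₀ (by linarith)]
            nlinarith
    have h0 : (∫ a, |f a * g a| ∂μ) ≤ 0 := by
      by_contra hc
      push_neg at hc
      have := this _ (half_pos hc)
      linarith
    calc (∫ a, |f a * g a| ∂μ) ≤ 0 := h0
      _ ≤ _ := by positivity
  · have hsA : 0 < Real.sqrt A := Real.sqrt_pos.mpr hApos
    have hsB : 0 < Real.sqrt B := Real.sqrt_pos.mpr hBpos
    have hA2 : Real.sqrt A ^ 2 = A := Real.sq_sqrt hA0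
    have hB2 : Real.sqrt B ^ 2 = B := Real.sq_sqrt hB0
    have := key (Real.sqrt B / Real.sqrt A) (by positivity)
    calc (∫ a, |f a * g a| ∂μ)
        ≤ (Real.sqrt B / Real.sqrt A * A + B / (Real.sqrt B / Real.sqrt A)) / 2 := this
      _ = Real.sqrt A * Real.sqrt B := by
          field_simp
          nlinarith [hA2, hB2, hsA, hsB]

lemma strip_restrict :
    (volume : Measure (ℝ × ℝ)).restrict OmegaStrip =
      (volume.restrict (Set.Ioc (0:ℝ) 1)).prod volume := by
  rw [OmegaStrip, Measure.volume_eq_prod, ← Measure.prod_restrict, Measure.restrict_univ]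

lemma sq_prod_int (f : ℝ × ℝ → ℝ) (h : SqInt f) :
    Integrable (fun p => f p ^ 2) ((volume.restrict (Set.Ioc (0:ℝ) 1)).prod volume) := by
  rw [← strip_restrict]; exact h

lemma absmul_int (f g : ℝ × ℝ → ℝ) (hfc : Continuous f) (hgc : Continuous g)
    (hf : SqInt f) (hg : SqInt g) :
    Integrable (fun p => |f p * g p|)
      ((volume.restrict (Set.Ioc (0:ℝ) 1)).prod volume) := by
  have hi : Integrable (fun p => (f p ^ 2 + g p ^ 2) / 2)
      ((volume.restrict (Set.Ioc (0:ℝ) 1)).prod volume) :=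
    ((sq_prod_int f hf).add (sq_prod_int g hg)).div_const 2
  refine hi.mono' ((hfc.mul hgc).abs.aestronglyMeasurable) ?_
  filter_upwards with p
  rw [Real.norm_eq_abs, abs_abs, abs_mul]
  nlinarith [sq_nonneg (|f p| - |g p|), sq_abs (f p), sq_abs (g p),
    abs_nonneg (f p), abs_nonneg (g p)]

lemma d2_eq_fderiv (f : ℝ × ℝ → ℝ) (hf : ContDiff ℝ 1 f) (p : ℝ × ℝ) :
    d2 f p = fderiv ℝ f p ((0:ℝ), (1:ℝ)) := by
  have h1 : HasFDerivAt f (fderiv ℝ f p) p :=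
    (hf.differentiable one_ne_zero p).hasFDerivAt
  have h2 : HasDerivAt (fun s : ℝ => (p.1, s)) ((0:ℝ), (1:ℝ)) p.2 :=
    (hasDerivAt_const p.2 p.1).prodMk (hasDerivAt_id p.2)
  have h3 : HasDerivAt (fun s => f (p.1, s)) (fderiv ℝ f p ((0:ℝ), (1:ℝ))) p.2 := by
    exact h1.comp_hasDerivAt p.2 h2
  exact h3.deriv

lemma hasDerivAt_slice_y (f : ℝ × ℝ → ℝ) (hf : ContDiff ℝ 1 f) (x t : ℝ) :
    HasDerivAt (fun s => f (x, s)) (d2 f (x, t)) t := by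
  rw [d2_eq_fderiv f hf]
  have h1 : HasFDerivAt f (fderiv ℝ f (x, t)) (x, t) :=
    (hf.differentiable one_ne_zero (x, t)).hasFDerivAt
  have h2 : HasDerivAt (fun s : ℝ => (x, s)) ((0:ℝ), (1:ℝ)) t :=
    (hasDerivAt_const t x).prodMk (hasDerivAt_id t)
  exact h1.comp_hasDerivAt t h2

lemma d2_cont (f : ℝ × ℝ → ℝ) (hf : ContDiff ℝ 1 f) : Continuous (d2 f) := by
  have : d2 f = fun p => fderiv ℝ f p ((0:ℝ), (1:ℝ)) := funext fun p => d2_eq_fderiv f hf p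
  rw [this]
  exact (hf.continuous_fderiv one_ne_zero).clm_apply continuous_const

lemma d1_eq_fderiv (f : ℝ × ℝ → ℝ) (hf : ContDiff ℝ 1 f) (p : ℝ × ℝ) :
    d1 f p = fderiv ℝ f p ((1:ℝ), (0:ℝ)) := by
  have h1 : HasFDerivAt f (fderiv ℝ f p) p :=
    (hf.differentiable one_ne_zero p).hasFDerivAt
  have h2 : HasDerivAt (fun s : ℝ => (s, p.2)) ((1:ℝ), (0:ℝ)) p.1 :=
    (hasDerivAt_id p.1).prodMk (hasDerivAt_const p.1 p.2)
  have h3 : HasDerivAt (fun s => f (s, p.2)) (fderiv ℝ f p ((1:ℝ), (0:ℝ))) p.1 := by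
    exact h1.comp_hasDerivAt p.1 h2
  exact h3.deriv

lemma hasDerivAt_slice_x (f : ℝ × ℝ → ℝ) (hf : ContDiff ℝ 1 f) (t y : ℝ) :
    HasDerivAt (fun s => f (s, y)) (d1 f (t, y)) t := by
  rw [d1_eq_fderiv f hf]
  have h1 : HasFDerivAt f (fderiv ℝ f (t, y)) (t, y) :=
    (hf.differentiable one_ne_zero (t, y)).hasFDerivAt
  have h2 : HasDerivAt (fun s : ℝ => (s, y)) ((1:ℝ), (0:ℝ)) t :=
    (hasDerivAt_id t).prodMk (hasDerivAt_const t y)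
  exact h1.comp_hasDerivAt t h2

lemma d1_cont (f : ℝ × ℝ → ℝ) (hf : ContDiff ℝ 1 f) : Continuous (d1 f) := by
  have : d1 f = fun p => fderiv ℝ f p ((1:ℝ), (0:ℝ)) := funext fun p => d1_eq_fderiv f hf p
  rw [this]
  exact (hf.continuous_fderiv one_ne_zero).clm_apply continuous_const


lemma agmon_y (f : ℝ × ℝ → ℝ) (hf : ContDiff ℝ 1 f) (hf2 : SqInt f)
    (hdf2 : SqInt (d2 f)) (y : ℝ) :
    (∫ x in Set.Ioc (0:ℝ) 1, f (x, y) ^ 2) ≤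
      2 * ∫ p in OmegaStrip, |f p * d2 f p| := by
  set μ1 : Measure ℝ := volume.restrict (Set.Ioc (0:ℝ) 1) with hμ1
  have hPint : Integrable (fun p => |f p * d2 f p|) (μ1.prod volume) :=
    absmul_int f (d2 f) hf.continuous (d2_cont f hf) hf2 hdf2
  set D : ℝ := ∫ p in OmegaStrip, |f p * d2 f p| with hD
  have hDeq : D = ∫ p, |f p * d2 f p| ∂(μ1.prod volume) := by
    rw [hD]; rw [show (∫ p in OmegaStrip, |f p * d2 f p|) =
      ∫ p, |f p * d2 f p| ∂((volume : Measure (ℝ × ℝ)).restrict OmegaStrip) from rfl,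
      strip_restrict]
  have hF2int : Integrable (fun t => ∫ x, f (x, t) ^ 2 ∂μ1) volume :=
    (sq_prod_int f hf2).integral_prod_right
  -- suffices: for all ε > 0, bound + ε
  by_contra hlt
  push_neg at hlt
  set ε : ℝ := (∫ x in Set.Ioc (0:ℝ) 1, f (x, y) ^ 2) - 2 * D with hε
  have hεpos : 0 < ε := by simp only [hε]; linarith
  -- find y₀ with small slice
  have hy₀ : ∃ y₀ : ℝ, (∫ x, f (x, y₀) ^ 2 ∂μ1) < ε := by
    by_contra hc
    push_neg at hc
    have hconst : Integrable (fun _ : ℝ => ε) volume := by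
      refine hF2int.mono' aestronglyMeasurable_const ?_
      filter_upwards with t
      rw [Real.norm_eq_abs, abs_of_pos hεpos]
      exact hc t
    rw [integrable_const_iff] at hconst
    rcases hconst with h | h
    · exact hεpos.ne' h
    · haveI := h; exact measure_ne_top volume Set.univ Real.volume_univ
  obtain ⟨y₀, hy₀⟩ := hy₀
  -- a.e. slice integrability
  have hae : ∀ᵐ x ∂μ1, Integrable (fun t => |f (x, t) * d2 f (x, t)|) volume :=
    hPint.prod_right_ae
  have hkey : ∀ᵐ x ∂μ1,
      f (x, y) ^ 2 ≤ f (x, y₀) ^ 2 + ∫ t, 2 * |f (x, t) * d2 f (x, t)| ∂volume := by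
    filter_upwards [hae] with x hx
    have hderiv : ∀ t, HasDerivAt (fun s => f (x, s) ^ 2)
        (2 * f (x, t) * d2 f (x, t)) t := by
      intro t
      have h := (hasDerivAt_slice_y f hf x t).fun_pow 2
      exact h.congr_deriv (by norm_num)
    have hcont : Continuous fun t => 2 * f (x, t) * d2 f (x, t) := by
      have h1 : Continuous fun t : ℝ => f (x, t) :=
        hf.continuous.comp (continuous_const.prodMk continuous_id)
      have h2 : Continuous fun t : ℝ => d2 f (x, t) :=
        (d2_cont f hf).comp (continuous_const.prodMk continuous_id)
      exact (continuous_const.mul h1).mul h2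
    have hFTC : (∫ t in y₀..y, 2 * f (x, t) * d2 f (x, t)) =
        f (x, y) ^ 2 - f (x, y₀) ^ 2 :=
      intervalIntegral.integral_eq_sub_of_hasDerivAt (fun t _ => hderiv t)
        (hcont.intervalIntegrable y₀ y)
    have h1 : f (x, y) ^ 2 - f (x, y₀) ^ 2 ≤
        |∫ t in y₀..y, 2 * f (x, t) * d2 f (x, t)| := by
      rw [hFTC] at *; exact le_abs_self _
    have h2 : |∫ t in y₀..y, 2 * f (x, t) * d2 f (x, t)| ≤
        ∫ t in Set.uIoc y₀ y, |2 * f (x, t) * d2 f (x, t)| := by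
      have h2' := intervalIntegral.norm_integral_le_integral_norm_uIoc
          (f := fun t => 2 * f (x, t) * d2 f (x, t)) (a := y₀) (b := y) (μ := volume)
      simp only [Real.norm_eq_abs] at h2'
      exact h2'
    have h3 : (∫ t in Set.uIoc y₀ y, |2 * f (x, t) * d2 f (x, t)|) ≤
        ∫ t, 2 * |f (x, t) * d2 f (x, t)| ∂volume := by
      have heq : ∀ t : ℝ, |2 * f (x, t) * d2 f (x, t)| = 2 * |f (x, t) * d2 f (x, t)| := by
        intro t; rw [mul_assoc, abs_mul, abs_two]
      simp_rw [heq]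
      exact setIntegral_le_integral (hx.const_mul 2)
        (Eventually.of_forall fun t => by positivity)
    linarith
  -- integrate in x
  have hL : Integrable (fun x => f (x, y) ^ 2) μ1 := by
    have : Continuous fun x : ℝ => f (x, y) ^ 2 :=
      (hf.continuous.comp (continuous_id.prodMk continuous_const)).pow 2
    exact this.integrableOn_Ioc
  have hL0 : Integrable (fun x => f (x, y₀) ^ 2) μ1 := by
    have : Continuous fun x : ℝ => f (x, y₀) ^ 2 :=
      (hf.continuous.comp (continuous_id.prodMk continuous_const)).pow 2
    exact this.integrableOn_Ioc
  have hRint : Integrable (fun x => ∫ t, 2 * |f (x, t) * d2 f (x, t)| ∂volume) μ1 :=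
    (hPint.const_mul 2).integral_prod_left
  have hmono : (∫ x, f (x, y) ^ 2 ∂μ1) ≤
      ∫ x, (f (x, y₀) ^ 2 + ∫ t, 2 * |f (x, t) * d2 f (x, t)| ∂volume) ∂μ1 :=
    integral_mono_ae hL (hL0.add hRint) hkey
  have hsplit : (∫ x, (f (x, y₀) ^ 2 + ∫ t, 2 * |f (x, t) * d2 f (x, t)| ∂volume) ∂μ1)
      = (∫ x, f (x, y₀) ^ 2 ∂μ1) + ∫ x, ∫ t, 2 * |f (x, t) * d2 f (x, t)| ∂volume ∂μ1 :=
    integral_add hL0 hRint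
  have hfub : (∫ x, ∫ t, 2 * |f (x, t) * d2 f (x, t)| ∂volume ∂μ1) = 2 * D := by
    rw [← integral_prod _ (hPint.const_mul 2), hDeq, ← integral_const_mul]
  have : (∫ x, f (x, y) ^ 2 ∂μ1) < ε + 2 * D := by
    rw [hsplit, hfub] at hmono
    linarith
  simp only [hε] at this
  linarith

lemma exists_zero (h : ℝ × ℝ → ℝ) (hh : ContDiff ℝ 1 h) (havg : ∀ y, avgX h y = 0)
    (y : ℝ) : ∃ x₀ ∈ Set.Icc (0:ℝ) 1, h (x₀, y) = 0 := by
  by_contra hc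
  push_neg at hc
  have hcont : Continuous fun s : ℝ => h (s, y) :=
    hh.continuous.comp (continuous_id.prodMk continuous_const)
  have hsign : (∀ s ∈ Set.Icc (0:ℝ) 1, 0 < h (s, y)) ∨
      (∀ s ∈ Set.Icc (0:ℝ) 1, h (s, y) < 0) := by
    by_contra hc2
    push_neg at hc2
    obtain ⟨⟨a, ha, ha'⟩, ⟨b, hb, hb'⟩⟩ := hc2
    have ha2 : h (a, y) < 0 := lt_of_le_of_ne ha' (hc a ha)
    have hb2 : 0 < h (b, y) := lt_of_le_of_ne hb' (Ne.symm (hc b hb))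
    have hsub : Set.uIcc a b ⊆ Set.Icc (0:ℝ) 1 := by
      rw [Set.uIcc]
      exact Set.Icc_subset_Icc (le_min ha.1 hb.1) (max_le ha.2 hb.2)
    have hIVT := intermediate_value_uIcc
      (f := fun s : ℝ => h (s, y)) (a := a) (b := b) (hcont.continuousOn)
    have h0mem : (0:ℝ) ∈ Set.uIcc (h (a, y)) (h (b, y)) :=
      Set.mem_uIcc.mpr (Or.inl ⟨ha2.le, hb2.le⟩)
    obtain ⟨c, hc1, hc2'⟩ := hIVT h0mem
    exact hc c (hsub hc1) hc2'
  have hII : IntervalIntegrable (fun s : ℝ => h (s, y)) volume 0 1 :=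
    hcont.intervalIntegrable 0 1
  rcases hsign with hpos | hneg
  · have : 0 < ∫ s in (0:ℝ)..1, h (s, y) :=
      intervalIntegral.intervalIntegral_pos_of_pos_on hII
        (fun s hs => hpos s ⟨hs.1.le, hs.2.le⟩) one_pos
    rw [show (∫ s in (0:ℝ)..1, h (s, y)) = avgX h y from rfl, havg y] at this
    exact lt_irrefl 0 this
  · have : 0 < ∫ s in (0:ℝ)..1, -h (s, y) :=
      intervalIntegral.intervalIntegral_pos_of_pos_on (hII.neg)
        (fun s hs => neg_pos.mpr (hneg s ⟨hs.1.le, hs.2.le⟩)) one_pos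
    rw [intervalIntegral.integral_neg,
      show (∫ s in (0:ℝ)..1, h (s, y)) = avgX h y from rfl, havg y] at this
    simp at this

lemma hx_bound (h : ℝ × ℝ → ℝ) (hh : ContDiff ℝ 1 h) (havg : ∀ y, avgX h y = 0)
    (y : ℝ) (x : ℝ) (hx : x ∈ Set.Icc (0:ℝ) 1) :
    h (x, y) ^ 2 ≤ 2 * ∫ x' in Set.Ioc (0:ℝ) 1, |h (x', y) * d1 h (x', y)| := by
  obtain ⟨x₀, hx₀, hzero⟩ := exists_zero h hh havg y
  have hderiv : ∀ t, HasDerivAt (fun s => h (s, y) ^ 2)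
      (2 * h (t, y) * d1 h (t, y)) t := by
    intro t
    have hd := (hasDerivAt_slice_x h hh t y).fun_pow 2
    exact hd.congr_deriv (by norm_num)
  have hcont : Continuous fun t : ℝ => 2 * h (t, y) * d1 h (t, y) := by
    have h1 : Continuous fun t : ℝ => h (t, y) :=
      hh.continuous.comp (continuous_id.prodMk continuous_const)
    have h2 : Continuous fun t : ℝ => d1 h (t, y) :=
      (d1_cont h hh).comp (continuous_id.prodMk continuous_const)
    exact (continuous_const.mul h1).mul h2
  have hFTC : (∫ s in x₀..x, 2 * h (s, y) * d1 h (s, y)) =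
      h (x, y) ^ 2 - h (x₀, y) ^ 2 :=
    intervalIntegral.integral_eq_sub_of_hasDerivAt (fun t _ => hderiv t)
      (hcont.intervalIntegrable x₀ x)
  have h1 : h (x, y) ^ 2 ≤ |∫ s in x₀..x, 2 * h (s, y) * d1 h (s, y)| := by
    rw [hFTC, hzero]
    simpa using le_abs_self (h (x, y) ^ 2)
  have h2 := intervalIntegral.norm_integral_le_integral_norm_uIoc
      (f := fun s => 2 * h (s, y) * d1 h (s, y)) (a := x₀) (b := x) (μ := volume)
  simp only [Real.norm_eq_abs] at h2
  have hsub : Set.uIoc x₀ x ⊆ Set.Ioc (0:ℝ) 1 := by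
    rw [Set.uIoc]
    exact Set.Ioc_subset_Ioc (le_min hx₀.1 hx.1) (max_le hx₀.2 hx.2)
  have h3 : (∫ s in Set.uIoc x₀ x, |2 * h (s, y) * d1 h (s, y)|) ≤
      ∫ s in Set.Ioc (0:ℝ) 1, |2 * h (s, y) * d1 h (s, y)| := by
    refine setIntegral_mono_set ?_ ?_ (HasSubset.Subset.eventuallyLE hsub)
    · exact (hcont.abs).integrableOn_Ioc
    · exact Eventually.of_forall fun s => abs_nonneg _
  have h4 : (∫ s in Set.Ioc (0:ℝ) 1, |2 * h (s, y) * d1 h (s, y)|) =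
      2 * ∫ x' in Set.Ioc (0:ℝ) 1, |h (x', y) * d1 h (x', y)| := by
    rw [← integral_const_mul]
    congr 1
    funext s
    rw [mul_assoc, abs_mul, abs_two]
  linarith

/-- Anisotropic trilinear estimate (second form): there is an absolute
constant `C > 0` such that for all `C¹` functions `f, g, h` on `Ω = 𝕋 × ℝ` with
`f, ∂₂f, g, ∂₂g, h, ∂₁h ∈ L²(Ω)` and `h` of zero horizontal average,
`∫_Ω |fgh| ≤ C ‖f‖_{L²}^{1/2} ‖∂₂f‖_{L²}^{1/2} ‖g‖_{L²} ‖h‖_{L²}^{1/2} ‖∂₁h‖_{L²}^{1/2}`. -/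
theorem statement18 :
    ∃ C : ℝ, 0 < C ∧ ∀ f g h : ℝ × ℝ → ℝ,
      ContDiff ℝ 1 f → ContDiff ℝ 1 g → ContDiff ℝ 1 h →
      PeriodicX f → PeriodicX g → PeriodicX h →
      SqInt f → SqInt (d2 f) → SqInt g → SqInt (d2 g) → SqInt h → SqInt (d1 h) →
      (∀ y : ℝ, avgX h y = 0) →
      (∫ p in OmegaStrip, |f p * g p * h p|) ≤
        C * (Real.sqrt (l2norm f) * Real.sqrt (l2norm (d2 f))) * l2norm g *
          (Real.sqrt (l2norm h) * Real.sqrt (l2norm (d1 h))) := by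
  refine ⟨2, two_pos, ?_⟩
  intro f g h hfC hgC hhC _ _ _ hf2 hdf2 hg2 hdg2 hh2 hdh2 havg
  have hRHS0 : 0 ≤ 2 * (Real.sqrt (l2norm f) * Real.sqrt (l2norm (d2 f))) * l2norm g *
      (Real.sqrt (l2norm h) * Real.sqrt (l2norm (d1 h))) := by
    have hg0 : (0:ℝ) ≤ l2norm g := Real.sqrt_nonneg _
    have h2' : (0:ℝ) ≤ 2 := by norm_num
    exact mul_nonneg (mul_nonneg (mul_nonneg h2'
      (mul_nonneg (Real.sqrt_nonneg _) (Real.sqrt_nonneg _))) hg0)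
      (mul_nonneg (Real.sqrt_nonneg _) (Real.sqrt_nonneg _))
  by_cases hI : IntegrableOn (fun p => |f p * g p * h p|) OmegaStrip
  swap
  · rw [integral_undef hI]; exact hRHS0
  set μ1 : Measure ℝ := volume.restrict (Set.Ioc (0:ℝ) 1) with hμ1
  set F2g : ℝ → ℝ := fun t => ∫ x, g (x, t) ^ 2 ∂μ1 with hF2g
  set Φ : ℝ → ℝ := fun t => ∫ x, |h (x, t) * d1 h (x, t)| ∂μ1 with hΦ
  set Df : ℝ := ∫ p in OmegaStrip, |f p * d2 f p| with hDf
  set Dh : ℝ := ∫ p in OmegaStrip, |h p * d1 h p| with hDh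
  have hPf : Integrable (fun p => |f p * d2 f p|) (μ1.prod volume) :=
    absmul_int f (d2 f) hfC.continuous (d2_cont f hfC) hf2 hdf2
  have hPh : Integrable (fun p => |h p * d1 h p|) (μ1.prod volume) :=
    absmul_int h (d1 h) hhC.continuous (d1_cont h hhC) hh2 hdh2
  have hPfgh : Integrable (fun p => |f p * g p * h p|) (μ1.prod volume) := by
    rw [hμ1, ← strip_restrict]; exact hI
  have hDf0 : 0 ≤ Df := by
    rw [hDf]; exact integral_nonneg fun p => abs_nonneg _
  have hDh0 : 0 ≤ Dh := by
    rw [hDh]; exact integral_nonneg fun p => abs_nonneg _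
  have hF2g0 : ∀ t, 0 ≤ F2g t := fun t => integral_nonneg fun x => sq_nonneg _
  have hΦ0 : ∀ t, 0 ≤ Φ t := fun t => integral_nonneg fun x => abs_nonneg _
  -- Fubini for the LHS
  have hLHS : (∫ p in OmegaStrip, |f p * g p * h p|) =
      ∫ t, ∫ x, |f (x, t) * g (x, t) * h (x, t)| ∂μ1 ∂volume := by
    rw [show (∫ p in OmegaStrip, |f p * g p * h p|) =
      ∫ p, |f p * g p * h p| ∂((volume : Measure (ℝ × ℝ)).restrict OmegaStrip) from rfl,
      strip_restrict]
    exact integral_prod_symm _ hPfgh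
  -- per-slice bound
  have hinner : ∀ t : ℝ, (∫ x, |f (x, t) * g (x, t) * h (x, t)| ∂μ1) ≤
      Real.sqrt (2 * Df) * (Real.sqrt (F2g t) * Real.sqrt (2 * Φ t)) := by
    intro t
    have hfgc : Continuous fun x : ℝ => f (x, t) * g (x, t) :=
      (hfC.continuous.comp (continuous_id.prodMk continuous_const)).mul
        (hgC.continuous.comp (continuous_id.prodMk continuous_const))
    have hfghc : Continuous fun x : ℝ => f (x, t) * g (x, t) * h (x, t) :=
      hfgc.mul (hhC.continuous.comp (continuous_id.prodMk continuous_const))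
    have hb : ∀ x ∈ Set.Ioc (0:ℝ) 1, |f (x, t) * g (x, t) * h (x, t)| ≤
        Real.sqrt (2 * Φ t) * |f (x, t) * g (x, t)| := by
      intro x hx
      have hh2b : h (x, t) ^ 2 ≤ 2 * Φ t :=
        hx_bound h hhC havg t x (Set.Ioc_subset_Icc_self hx)
      have habs : |h (x, t)| ≤ Real.sqrt (2 * Φ t) := Real.abs_le_sqrt hh2b
      calc |f (x, t) * g (x, t) * h (x, t)|
          = |f (x, t) * g (x, t)| * |h (x, t)| := abs_mul _ _
        _ ≤ |f (x, t) * g (x, t)| * Real.sqrt (2 * Φ t) :=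
            mul_le_mul_of_nonneg_left habs (abs_nonneg _)
        _ = Real.sqrt (2 * Φ t) * |f (x, t) * g (x, t)| := mul_comm _ _
    have hstep1 : (∫ x, |f (x, t) * g (x, t) * h (x, t)| ∂μ1) ≤
        ∫ x, Real.sqrt (2 * Φ t) * |f (x, t) * g (x, t)| ∂μ1 := by
      refine integral_mono_ae ?_ ?_ ?_
      · exact hfghc.abs.integrableOn_Ioc
      · exact (hfgc.abs.integrableOn_Ioc).const_mul _
      · filter_upwards [ae_restrict_mem measurableSet_Ioc] with x hx using hb x hx
    have hcs : (∫ x, |f (x, t) * g (x, t)| ∂μ1) ≤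
        Real.sqrt (∫ x, f (x, t) ^ 2 ∂μ1) * Real.sqrt (F2g t) := by
      refine cs_int μ1 (fun x => f (x, t)) (fun x => g (x, t))
        hfgc.aestronglyMeasurable ?_ ?_
      · exact ((hfC.continuous.comp (continuous_id.prodMk continuous_const)).pow 2).integrableOn_Ioc
      · exact ((hgC.continuous.comp (continuous_id.prodMk continuous_const)).pow 2).integrableOn_Ioc
    have hag : (∫ x, f (x, t) ^ 2 ∂μ1) ≤ 2 * Df := agmon_y f hfC hf2 hdf2 t
    calc (∫ x, |f (x, t) * g (x, t) * h (x, t)| ∂μ1)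
        ≤ ∫ x, Real.sqrt (2 * Φ t) * |f (x, t) * g (x, t)| ∂μ1 := hstep1
      _ = Real.sqrt (2 * Φ t) * ∫ x, |f (x, t) * g (x, t)| ∂μ1 := integral_const_mul _ _
      _ ≤ Real.sqrt (2 * Φ t) * (Real.sqrt (∫ x, f (x, t) ^ 2 ∂μ1) * Real.sqrt (F2g t)) := by
          exact mul_le_mul_of_nonneg_left hcs (Real.sqrt_nonneg _)
      _ ≤ Real.sqrt (2 * Φ t) * (Real.sqrt (2 * Df) * Real.sqrt (F2g t)) :=
          mul_le_mul_of_nonneg_left (mul_le_mul_of_nonneg_right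
            (Real.sqrt_le_sqrt hag) (Real.sqrt_nonneg _)) (Real.sqrt_nonneg _)
      _ = Real.sqrt (2 * Df) * (Real.sqrt (F2g t) * Real.sqrt (2 * Φ t)) := by ring
  -- integrability in t
  have hF2gint : Integrable F2g volume := (sq_prod_int g hg2).integral_prod_right
  have hΦint : Integrable Φ volume := hPh.integral_prod_right
  have hsm : AEStronglyMeasurable
      (fun t => Real.sqrt (F2g t) * Real.sqrt (2 * Φ t)) volume := by
    exact (Real.continuous_sqrt.comp_aestronglyMeasurable hF2gint.1).mul
      (Real.continuous_sqrt.comp_aestronglyMeasurable ((hΦint.const_mul 2).1))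
  have hprodint : Integrable (fun t => Real.sqrt (F2g t) * Real.sqrt (2 * Φ t)) volume := by
    refine ((hF2gint.add (hΦint.const_mul 2)).div_const 2).mono' hsm ?_
    filter_upwards with t
    rw [Real.norm_eq_abs]
    simp only [Pi.add_apply]
    have h1 : (0:ℝ) ≤ F2g t := hF2g0 t
    have h2 : (0:ℝ) ≤ 2 * Φ t := by linarith [hΦ0 t]
    rw [abs_of_nonneg (mul_nonneg (Real.sqrt_nonneg _) (Real.sqrt_nonneg _))]
    nlinarith [Real.sq_sqrt h1, Real.sq_sqrt h2,
      sq_nonneg (Real.sqrt (F2g t) - Real.sqrt (2 * Φ t))]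
  -- outer estimate
  have houter : (∫ t, ∫ x, |f (x, t) * g (x, t) * h (x, t)| ∂μ1 ∂volume) ≤
      Real.sqrt (2 * Df) * ∫ t, Real.sqrt (F2g t) * Real.sqrt (2 * Φ t) ∂volume := by
    rw [← integral_const_mul]
    refine integral_mono_of_nonneg ?_ (hprodint.const_mul _) (Eventually.of_forall hinner)
    exact Eventually.of_forall fun t => integral_nonneg fun x => abs_nonneg _
  -- Cauchy-Schwarz in t
  have hsq1 : Integrable (fun t => Real.sqrt (F2g t) ^ 2) volume :=
    hF2gint.congr (Eventually.of_forall fun t => (Real.sq_sqrt (hF2g0 t)).symm)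
  have hsq2 : Integrable (fun t => Real.sqrt (2 * Φ t) ^ 2) volume :=
    (hΦint.const_mul 2).congr (Eventually.of_forall fun t =>
      show (2:ℝ) * Φ t = Real.sqrt (2 * Φ t) ^ 2 from
        (Real.sq_sqrt (by linarith [hΦ0 t])).symm)
  have hcst := cs_int volume (fun t => Real.sqrt (F2g t)) (fun t => Real.sqrt (2 * Φ t))
    hsm hsq1 hsq2
  have heq1 : (∫ t, |Real.sqrt (F2g t) * Real.sqrt (2 * Φ t)| ∂volume) =
      ∫ t, Real.sqrt (F2g t) * Real.sqrt (2 * Φ t) ∂volume :=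
    integral_congr_ae (Eventually.of_forall fun t =>
      abs_of_nonneg (mul_nonneg (Real.sqrt_nonneg _) (Real.sqrt_nonneg _)))
  have heq2 : (∫ t, Real.sqrt (F2g t) ^ 2 ∂volume) = ∫ t, F2g t ∂volume :=
    integral_congr_ae (Eventually.of_forall fun t => Real.sq_sqrt (hF2g0 t))
  have heq3 : (∫ t, Real.sqrt (2 * Φ t) ^ 2 ∂volume) = ∫ t, 2 * Φ t ∂volume :=
    integral_congr_ae (Eventually.of_forall fun t => Real.sq_sqrt (by linarith [hΦ0 t]))
  rw [heq1, heq2, heq3] at hcst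
  -- identify the t-integrals
  have hsqg : (∫ t, F2g t ∂volume) = sqL2 g := by
    rw [sqL2, show (∫ p in OmegaStrip, (g p) ^ 2) =
      ∫ p, (g p) ^ 2 ∂((volume : Measure (ℝ × ℝ)).restrict OmegaStrip) from rfl,
      strip_restrict]
    exact (integral_prod_symm _ (sq_prod_int g hg2)).symm
  have hΦtot : (∫ t, 2 * Φ t ∂volume) = 2 * Dh := by
    rw [integral_const_mul]
    congr 1
    rw [hDh, show (∫ p in OmegaStrip, |h p * d1 h p|) =
      ∫ p, |h p * d1 h p| ∂((volume : Measure (ℝ × ℝ)).restrict OmegaStrip) from rfl,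
      strip_restrict]
    exact (integral_prod_symm _ hPh).symm
  rw [hsqg, hΦtot] at hcst
  -- L2 Cauchy-Schwarz on the strip for Df, Dh
  have hDfle : Df ≤ l2norm f * l2norm (d2 f) := by
    rw [hDf]
    exact cs_int ((volume : Measure (ℝ × ℝ)).restrict OmegaStrip) f (d2 f)
      (hfC.continuous.mul (d2_cont f hfC)).aestronglyMeasurable hf2 hdf2
  have hDhle : Dh ≤ l2norm h * l2norm (d1 h) := by
    rw [hDh]
    exact cs_int ((volume : Measure (ℝ × ℝ)).restrict OmegaStrip) h (d1 h)
      (hhC.continuous.mul (d1_cont h hhC)).aestronglyMeasurable hh2 hdh2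
  -- final chain
  have hmain : (∫ p in OmegaStrip, |f p * g p * h p|) ≤
      Real.sqrt (2 * Df) * (Real.sqrt (sqL2 g) * Real.sqrt (2 * Dh)) := by
    rw [hLHS]
    refine houter.trans ?_
    exact mul_le_mul_of_nonneg_left hcst (Real.sqrt_nonneg _)
  refine hmain.trans ?_
  have hstep : Real.sqrt (2 * Df) * (Real.sqrt (sqL2 g) * Real.sqrt (2 * Dh)) ≤
      Real.sqrt (2 * (l2norm f * l2norm (d2 f))) *
        (Real.sqrt (sqL2 g) * Real.sqrt (2 * (l2norm h * l2norm (d1 h)))) := by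
    have t1 : Real.sqrt (2 * Df) ≤ Real.sqrt (2 * (l2norm f * l2norm (d2 f))) :=
      Real.sqrt_le_sqrt (by linarith)
    have t2 : Real.sqrt (2 * Dh) ≤ Real.sqrt (2 * (l2norm h * l2norm (d1 h))) :=
      Real.sqrt_le_sqrt (by linarith)
    exact mul_le_mul t1 (mul_le_mul_of_nonneg_left t2 (Real.sqrt_nonneg _))
      (mul_nonneg (Real.sqrt_nonneg _) (Real.sqrt_nonneg _)) (Real.sqrt_nonneg _)
  refine hstep.trans ?_
  have hl2f0 : (0:ℝ) ≤ l2norm f := Real.sqrt_nonneg _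
  have hl2df0 : (0:ℝ) ≤ l2norm (d2 f) := Real.sqrt_nonneg _
  have hl2h0 : (0:ℝ) ≤ l2norm h := Real.sqrt_nonneg _
  have hl2dh0 : (0:ℝ) ≤ l2norm (d1 h) := Real.sqrt_nonneg _
  have e1 : Real.sqrt (2 * (l2norm f * l2norm (d2 f))) =
      Real.sqrt 2 * (Real.sqrt (l2norm f) * Real.sqrt (l2norm (d2 f))) := by
    rw [Real.sqrt_mul (by norm_num : (0:ℝ) ≤ 2), Real.sqrt_mul hl2f0]
  have e2 : Real.sqrt (2 * (l2norm h * l2norm (d1 h))) =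
      Real.sqrt 2 * (Real.sqrt (l2norm h) * Real.sqrt (l2norm (d1 h))) := by
    rw [Real.sqrt_mul (by norm_num : (0:ℝ) ≤ 2), Real.sqrt_mul hl2h0]
  have e3 : Real.sqrt (sqL2 g) = l2norm g := rfl
  rw [e1, e2, e3]
  have e4 : Real.sqrt 2 * Real.sqrt 2 = 2 := Real.mul_self_sqrt (by norm_num)
  refine le_of_eq ?_
  linear_combination (Real.sqrt (l2norm f) * Real.sqrt (l2norm (d2 f)) * l2norm g *
    Real.sqrt (l2norm h) * Real.sqrt (l2norm (d1 h))) * e4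
end
end
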